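/- Define WENO weights ω_k = α_k / ∑_l α_l with α_k = c_k / (I_k + ε)^m, where ε = λ h², λ > 0, and m = ⌈r/2⌉. If all substencils lie in a smoothness region, so that I_k - I_j = O(h^{r+1}) and I_k = O(h²) with I_k + ε bounded below by a positive multiple of h², then ω_k = c_k (1 + O(h^{r-1})) for every k; if the k-th substencil crosses a discontinuity (I_k bounded below away from 0) while some other substencil is smooth (I_j = O(h²)), then ω_k = O(h^{r-1}). -/

import Mathlib

lemma weno_abs_pow_sub_pow_le (a b B : ℝ) (ha : 0 ≤ a) (hb : 0 ≤ b)
    (haB : a ≤ B) (hbB : b ≤ B) (m : ℕ) :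
    |a ^ m - b ^ m| ≤ m * B ^ (m - 1) * |a - b| := by
  induction m with
  | zero => simp
  | succ n ih =>
    have hB : 0 ≤ B := le_trans ha haB
    have key : a ^ (n + 1) - b ^ (n + 1) = a * (a ^ n - b ^ n) + (a - b) * b ^ n := by
      ring
    rw [key]
    have h1 : |a * (a ^ n - b ^ n) + (a - b) * b ^ n|
        ≤ a * |a ^ n - b ^ n| + |a - b| * b ^ n := by
      calc |a * (a ^ n - b ^ n) + (a - b) * b ^ n|
          ≤ |a * (a ^ n - b ^ n)| + |(a - b) * b ^ n| := abs_add_le _ _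
        _ = a * |a ^ n - b ^ n| + |a - b| * b ^ n := by
            rw [abs_mul, abs_mul, abs_of_nonneg ha, abs_of_nonneg (pow_nonneg hb n)]
    have h2 : a * |a ^ n - b ^ n| ≤ B * (n * B ^ (n - 1) * |a - b|) :=
      mul_le_mul haB ih (abs_nonneg _) hB
    have h3 : |a - b| * b ^ n ≤ B ^ n * |a - b| := by
      rw [mul_comm]
      exact mul_le_mul_of_nonneg_right (pow_le_pow_left₀ hb hbB n) (abs_nonneg _)
    have h4 : B * (↑n * B ^ (n - 1) * |a - b|) + B ^ n * |a - b|
        ≤ (↑(n + 1)) * B ^ (n + 1 - 1) * |a - b| := by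
      rcases n with _ | p
      · simp
      · have hBp : B * B ^ p = B ^ (p + 1) := by ring
        simp only [Nat.add_sub_cancel]
        push_cast
        refine le_of_eq ?_
        rw [← hBp]; ring
    linarith


/-- WENO weights `ω_k = α_k / ∑_l α_l` with `α_k = c_k / (I_k + ε)^m`,
`ε = λ h²` (`λ > 0`), `m = ⌈r/2⌉`.
(a) If all substencils lie in a smoothness region, so that `I_k - I_j = O(h^{r+1})`,
`I_k = O(h²)` and `I_k + ε` is bounded below by a positive multiple of `h²`, then
`ω_k = c_k (1 + O(h^{r-1}))` for every `k`.
(b) If the `k`-th substencil crosses a discontinuity (`I_k` bounded below away from `0`)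
while some other substencil is smooth (`I_j = O(h²)`), then `ω_k = O(h^{r-1})`. -/
theorem weno_weight_asymptotics
    (r : ℕ) (hr : 2 ≤ r) (m : ℕ) (hm : m = (r + 1) / 2)
    (lam : ℝ) (hlam : 0 < lam)
    (c : ℕ → ℝ) (hc : ∀ k < r, 0 < c k ∧ c k < 1)
    (hcsum : ∑ k ∈ Finset.range r, c k = 1)
    (I : ℝ → ℕ → ℝ) (hInonneg : ∀ h : ℝ, 0 < h → ∀ k < r, 0 ≤ I h k)
    (ω : ℝ → ℕ → ℝ)
    (hω : ∀ h : ℝ, 0 < h → ∀ k : ℕ, ω h k =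
      (c k / (I h k + lam * h ^ 2) ^ m) /
        ∑ l ∈ Finset.range r, c l / (I h l + lam * h ^ 2) ^ m) :
    ((∃ C : ℝ, ∀ h : ℝ, 0 < h → ∀ k < r, ∀ j < r, |I h k - I h j| ≤ C * h ^ (r + 1)) →
     (∃ C : ℝ, ∀ h : ℝ, 0 < h → ∀ k < r, I h k ≤ C * h ^ 2) →
     (∃ c₀ > 0, ∀ h : ℝ, 0 < h → ∀ k < r, c₀ * h ^ 2 ≤ I h k + lam * h ^ 2) →
     ∀ k < r, ∃ C : ℝ, ∃ h₀ > 0, ∀ h : ℝ, 0 < h → h < h₀ →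
       |ω h k / c k - 1| ≤ C * h ^ (r - 1)) ∧
    (∀ k < r,
      (∃ c₁ > 0, ∃ h₁ > 0, ∀ h : ℝ, 0 < h → h < h₁ → c₁ ≤ I h k) →
      (∃ j < r, j ≠ k ∧ ∃ C : ℝ, ∀ h : ℝ, 0 < h → I h j ≤ C * h ^ 2) →
      ∃ C : ℝ, ∃ h₀ > 0, ∀ h : ℝ, 0 < h → h < h₀ →
        |ω h k| ≤ C * h ^ (r - 1)) := by
  constructor
  · rintro ⟨C₁, hC₁⟩ ⟨C₂, hC₂⟩ ⟨c₀, hc₀pos, hlow⟩ k hk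
    have hm1 : 1 ≤ m := by omega
    have hck := (hc k hk).1
    have hC₁0 : 0 ≤ C₁ := by
      have := hC₁ 1 one_pos k hk k hk
      simpa using this
    refine ⟨(m : ℝ) * (C₂ + lam) ^ (2 * m - 1) * C₁ / c₀ ^ (2 * m), 1, one_pos, ?_⟩
    intro h hh _
    have hh2 : (0 : ℝ) < h ^ 2 := by positivity
    have hd_lb : ∀ l < r, c₀ * h ^ 2 ≤ I h l + lam * h ^ 2 := hlow h hh
    have hd_ub : ∀ l < r, I h l + lam * h ^ 2 ≤ (C₂ + lam) * h ^ 2 := fun l hl => by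
      have := hC₂ h hh l hl; nlinarith
    have hdpos : ∀ l < r, 0 < I h l + lam * h ^ 2 := fun l hl =>
      lt_of_lt_of_le (by positivity) (hd_lb l hl)
    have hbpos : (0 : ℝ) < (C₂ + lam) * h ^ 2 :=
      lt_of_lt_of_le (hdpos k hk) (hd_ub k hk)
    have hBpow : ∀ n : ℕ, (0 : ℝ) ≤ ((C₂ + lam) * h ^ 2) ^ n := fun n => pow_nonneg hbpos.le n
    set S := ∑ l ∈ Finset.range r, c l / (I h l + lam * h ^ 2) ^ m with hS
    have hSlb : 1 / ((C₂ + lam) * h ^ 2) ^ m ≤ S := by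
      rw [hS]
      calc 1 / ((C₂ + lam) * h ^ 2) ^ m
          = ∑ l ∈ Finset.range r, c l / ((C₂ + lam) * h ^ 2) ^ m := by
            rw [← Finset.sum_div, hcsum]
        _ ≤ S := by
            rw [hS]
            refine Finset.sum_le_sum fun l hl => ?_
            have hl' := Finset.mem_range.mp hl
            exact div_le_div_of_nonneg_left (hc l hl').1.le
              (pow_pos (hdpos l hl') m)
              (pow_le_pow_left₀ (hdpos l hl').le (hd_ub l hl') m)
    have hSpos : 0 < S := lt_of_lt_of_le (by positivity) hSlb
    have hωk : ω h k = c k / (I h k + lam * h ^ 2) ^ m / S := hω h hh k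
    -- key identity
    have key : ω h k / c k - 1 = (1 / (I h k + lam * h ^ 2) ^ m - S) / S := by
      rw [hωk]
      have hdk := (hdpos k hk).ne'
      field_simp
    -- the difference as a sum
    have hsum : 1 / (I h k + lam * h ^ 2) ^ m - S
        = ∑ l ∈ Finset.range r,
            c l * (1 / (I h k + lam * h ^ 2) ^ m - 1 / (I h l + lam * h ^ 2) ^ m) := by
      simp only [mul_sub]
      rw [Finset.sum_sub_distrib, ← Finset.sum_mul, hcsum, one_mul, hS]
      simp only [mul_one_div]
    -- per-term bound
    set T := (m : ℝ) * ((C₂ + lam) * h ^ 2) ^ (m - 1) * (C₁ * h ^ (r + 1))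
        / (c₀ * h ^ 2) ^ (2 * m) with hT
    have hTnn : 0 ≤ T := by
      rw [hT]
      exact div_nonneg (mul_nonneg (mul_nonneg (Nat.cast_nonneg m) (hBpow _))
        (by positivity)) (by positivity)
    have hterm : ∀ l < r,
        |1 / (I h k + lam * h ^ 2) ^ m - 1 / (I h l + lam * h ^ 2) ^ m| ≤ T := by
      intro l hl
      have hdl := hdpos l hl
      have hdk := hdpos k hk
      have heq : 1 / (I h k + lam * h ^ 2) ^ m - 1 / (I h l + lam * h ^ 2) ^ m
          = ((I h l + lam * h ^ 2) ^ m - (I h k + lam * h ^ 2) ^ m)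
            / ((I h k + lam * h ^ 2) ^ m * (I h l + lam * h ^ 2) ^ m) := by
        field_simp
      have hdenpos : 0 < (I h k + lam * h ^ 2) ^ m * (I h l + lam * h ^ 2) ^ m :=
        mul_pos (pow_pos hdk m) (pow_pos hdl m)
      rw [heq, abs_div, abs_of_pos hdenpos]
      have hnum : |(I h l + lam * h ^ 2) ^ m - (I h k + lam * h ^ 2) ^ m|
          ≤ (m : ℝ) * ((C₂ + lam) * h ^ 2) ^ (m - 1) * (C₁ * h ^ (r + 1)) := by
        have haux := weno_abs_pow_sub_pow_le (I h l + lam * h ^ 2)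
          (I h k + lam * h ^ 2) ((C₂ + lam) * h ^ 2) hdl.le hdk.le
          (hd_ub l hl) (hd_ub k hk) m
        have hdiff : |(I h l + lam * h ^ 2) - (I h k + lam * h ^ 2)| ≤ C₁ * h ^ (r + 1) := by
          have := hC₁ h hh l hl k hk
          have heq2 : (I h l + lam * h ^ 2) - (I h k + lam * h ^ 2) = I h l - I h k := by ring
          rw [heq2]
          exact this
        calc |(I h l + lam * h ^ 2) ^ m - (I h k + lam * h ^ 2) ^ m|
            ≤ (m : ℝ) * ((C₂ + lam) * h ^ 2) ^ (m - 1)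
              * |(I h l + lam * h ^ 2) - (I h k + lam * h ^ 2)| := haux
          _ ≤ (m : ℝ) * ((C₂ + lam) * h ^ 2) ^ (m - 1) * (C₁ * h ^ (r + 1)) := by
              exact mul_le_mul_of_nonneg_left hdiff
                (mul_nonneg (Nat.cast_nonneg m) (hBpow _))
      have hden : (c₀ * h ^ 2) ^ (2 * m)
          ≤ (I h k + lam * h ^ 2) ^ m * (I h l + lam * h ^ 2) ^ m := by
        calc (c₀ * h ^ 2) ^ (2 * m) = (c₀ * h ^ 2) ^ m * (c₀ * h ^ 2) ^ m := by
              rw [two_mul, pow_add]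
          _ ≤ (I h k + lam * h ^ 2) ^ m * (I h l + lam * h ^ 2) ^ m := by
              refine mul_le_mul ?_ ?_ (by positivity) (by positivity)
              · exact pow_le_pow_left₀ (by positivity) (hd_lb k hk) m
              · exact pow_le_pow_left₀ (by positivity) (hd_lb l hl) m
      rw [hT]
      exact div_le_div₀ (mul_nonneg (mul_nonneg (Nat.cast_nonneg m) (hBpow _))
        (by positivity)) hnum (by positivity) hden
    have hXle : |1 / (I h k + lam * h ^ 2) ^ m - S| ≤ T := by
      rw [hsum]
      calc |∑ l ∈ Finset.range r,
            c l * (1 / (I h k + lam * h ^ 2) ^ m - 1 / (I h l + lam * h ^ 2) ^ m)|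
          ≤ ∑ l ∈ Finset.range r,
            |c l * (1 / (I h k + lam * h ^ 2) ^ m - 1 / (I h l + lam * h ^ 2) ^ m)| :=
            Finset.abs_sum_le_sum_abs _ _
        _ ≤ ∑ l ∈ Finset.range r, c l * T := by
            refine Finset.sum_le_sum fun l hl => ?_
            have hl' := Finset.mem_range.mp hl
            rw [abs_mul, abs_of_nonneg (hc l hl').1.le]
            exact mul_le_mul_of_nonneg_left (hterm l hl') (hc l hl').1.le
        _ = T := by rw [← Finset.sum_mul, hcsum, one_mul]
    -- combine
    have hbm : (1 : ℝ) ≤ ((C₂ + lam) * h ^ 2) ^ m * S := by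
      have hthis := mul_le_mul_of_nonneg_left hSlb (le_of_lt (pow_pos hbpos m))
      have hBne : ((C₂ + lam) * h ^ 2) ^ m ≠ 0 := (pow_pos hbpos m).ne'
      calc (1 : ℝ) = ((C₂ + lam) * h ^ 2) ^ m * (1 / ((C₂ + lam) * h ^ 2) ^ m) := by
            field_simp
        _ ≤ ((C₂ + lam) * h ^ 2) ^ m * S := hthis
    have hmain : |ω h k / c k - 1| ≤ T * ((C₂ + lam) * h ^ 2) ^ m := by
      rw [key, abs_div, abs_of_pos hSpos, div_le_iff₀ hSpos]
      calc |1 / (I h k + lam * h ^ 2) ^ m - S| ≤ T := hXle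
        _ = T * 1 := (mul_one T).symm
        _ ≤ T * (((C₂ + lam) * h ^ 2) ^ m * S) := mul_le_mul_of_nonneg_left hbm hTnn
        _ = T * ((C₂ + lam) * h ^ 2) ^ m * S := by ring
    refine le_trans hmain (le_of_eq ?_)
    -- final computation
    rw [hT]
    obtain ⟨p, rfl⟩ : ∃ p, m = p + 1 := ⟨m - 1, by omega⟩
    obtain ⟨q, rfl⟩ : ∃ q, r = q + 2 := ⟨r - 2, by omega⟩
    have e1 : p + 1 - 1 = p := by omega
    have e2 : 2 * (p + 1) - 1 = 2 * p + 1 := by omega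
    have e3 : q + 2 - 1 = q + 1 := by omega
    have e4 : 2 * (p + 1) = 2 * p + 2 := by omega
    rw [e1, e2, e3, e4]
    have hBsplit : ∀ n : ℕ, ((C₂ + lam) * h ^ 2) ^ n = (C₂ + lam) ^ n * h ^ (2 * n) :=
      fun n => by rw [mul_pow, pow_mul]
    have hCsplit : ∀ n : ℕ, (c₀ * h ^ 2) ^ n = c₀ ^ n * h ^ (2 * n) :=
      fun n => by rw [mul_pow, pow_mul]
    rw [hBsplit p, hBsplit (p + 1), hCsplit (2 * p + 2)]
    have hc₀ne : c₀ ≠ 0 := ne_of_gt hc₀pos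
    have hhne : h ≠ 0 := ne_of_gt hh
    field_simp
    ring
  · rintro k hk ⟨c₁, hc₁pos, h₁, hh₁pos, hc₁⟩ ⟨j, hj, hjk, C, hCj⟩
    have hck := (hc k hk).1
    have hcj := (hc j hj).1
    have hC0 : 0 ≤ C := by
      have h1 := hCj 1 one_pos
      have h2 := hInonneg 1 one_pos j hj
      nlinarith
    have h2m : r - 1 ≤ 2 * m := by omega
    refine ⟨c k / c j * ((C + lam) / c₁) ^ m, min h₁ 1, lt_min hh₁pos one_pos, ?_⟩
    intro h hh hh0
    have hhh₁ : h < h₁ := lt_of_lt_of_le hh0 (min_le_left _ _)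
    have hh1 : h < 1 := lt_of_lt_of_le hh0 (min_le_right _ _)
    have hh2 : (0 : ℝ) < h ^ 2 := by positivity
    have hdpos : ∀ l < r, 0 < I h l + lam * h ^ 2 := fun l hl => by
      have := hInonneg h hh l hl; nlinarith
    have hdk : c₁ ≤ I h k + lam * h ^ 2 := by
      have := hc₁ h hh hhh₁; nlinarith
    have hdj : I h j + lam * h ^ 2 ≤ (C + lam) * h ^ 2 := by
      have := hCj h hh; nlinarith
    set S := ∑ l ∈ Finset.range r, c l / (I h l + lam * h ^ 2) ^ m with hS
    have hterm : c j / (I h j + lam * h ^ 2) ^ m ≤ S := by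
      refine Finset.single_le_sum (f := fun l => c l / (I h l + lam * h ^ 2) ^ m)
        (fun l hl => ?_) (Finset.mem_range.mpr hj)
      have hl' := Finset.mem_range.mp hl
      exact div_nonneg (hc l hl').1.le (pow_nonneg (hdpos l hl').le m)
    have htermpos : 0 < c j / (I h j + lam * h ^ 2) ^ m :=
      div_pos hcj (pow_pos (hdpos j hj) m)
    have hSpos : 0 < S := lt_of_lt_of_le htermpos hterm
    have hωk : ω h k = c k / (I h k + lam * h ^ 2) ^ m / S := hω h hh k
    have hωnn : 0 ≤ ω h k := by
      rw [hωk]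
      exact div_nonneg (div_nonneg hck.le (pow_nonneg (hdpos k hk).le m)) hSpos.le
    rw [abs_of_nonneg hωnn, hωk]
    have step1 : c k / (I h k + lam * h ^ 2) ^ m / S
        ≤ c k / (I h k + lam * h ^ 2) ^ m / (c j / (I h j + lam * h ^ 2) ^ m) := by
      exact div_le_div_of_nonneg_left
        (div_nonneg hck.le (pow_nonneg (hdpos k hk).le m)) htermpos hterm
    have step2 : c k / (I h k + lam * h ^ 2) ^ m / (c j / (I h j + lam * h ^ 2) ^ m)
        = c k / c j * ((I h j + lam * h ^ 2) ^ m / (I h k + lam * h ^ 2) ^ m) := by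
      field_simp
    have step3 : (I h j + lam * h ^ 2) ^ m / (I h k + lam * h ^ 2) ^ m
        ≤ ((C + lam) * h ^ 2) ^ m / c₁ ^ m := by
      refine div_le_div₀ (by positivity) ?_ (pow_pos hc₁pos m) ?_
      · exact pow_le_pow_left₀ (hdpos j hj).le hdj m
      · exact pow_le_pow_left₀ hc₁pos.le hdk m
    have step4 : ((C + lam) * h ^ 2) ^ m / c₁ ^ m = ((C + lam) / c₁) ^ m * h ^ (2 * m) := by
      rw [mul_pow, ← pow_mul, div_pow]
      ring
    have hpow : h ^ (2 * m) ≤ h ^ (r - 1) := pow_le_pow_of_le_one hh.le hh1.le h2m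
    calc c k / (I h k + lam * h ^ 2) ^ m / S
        ≤ c k / c j * ((I h j + lam * h ^ 2) ^ m / (I h k + lam * h ^ 2) ^ m) := by
          rw [← step2]; exact step1
      _ ≤ c k / c j * (((C + lam) / c₁) ^ m * h ^ (2 * m)) := by
          rw [← step4]
          exact mul_le_mul_of_nonneg_left step3 (div_nonneg hck.le hcj.le)
      _ ≤ c k / c j * ((C + lam) / c₁) ^ m * h ^ (r - 1) := by
          rw [mul_assoc]
          refine mul_le_mul_of_nonneg_left ?_ (div_nonneg hck.le hcj.le)
          exact mul_le_mul_of_nonneg_left hpow (by positivity)
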